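/- Geometric convergence recursion for ITAT: Suppose A satisfies the 3s-RIP with δ_{3s} < (√5 − 1)/2, the stepsize v satisfies (3−√5)/(2(1−δ_{3s})) < v < (√5+1)/(2(1−δ_{3s})), and b = A x̄ + ε with x̄ s-sparse. Then the ITAT iterates x^{k+1} := H_s(T_{vλ}(x^k − v Aᵀ(Ax^k − b))) satisfy ‖x^{k+1} − x̄‖_2 ≤ ρ‖x^k − x̄‖_2 + ((√5+1)/2)·v·(√(1+δ_{2s})‖ε‖_2 + √(2s)·λ), where ρ := ((√5+1)/2)(|1 − v| + v δ_{3s}) ∈ (0,1). -/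

import Mathlib

open Finset Matrix

noncomputable def l1 {k : ℕ} (x : Fin k → ℝ) : ℝ := ∑ i, |x i|

noncomputable def l2 {k : ℕ} (x : Fin k → ℝ) : ℝ := Real.sqrt (∑ i, (x i)^2)

def restr {k : ℕ} (I : Finset (Fin k)) (x : Fin k → ℝ) : Fin k → ℝ :=
  fun i => if i ∈ I then x i else 0


noncomputable def softT {k : ℕ} (lam : ℝ) (x : Fin k → ℝ) : Fin k → ℝ :=
  fun i => max (|x i| - lam) 0 * Real.sign (x i)

noncomputable def enlarge {k : ℕ} (lam : ℝ) (x : Fin k → ℝ) : Fin k → ℝ :=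
  fun i => (1 + lam / l2 x) * x i

noncomputable def thrT {k : ℕ} (lam : ℝ) (x : Fin k → ℝ) : Fin k → ℝ :=
  enlarge lam (softT lam x)


def RIP {m n : ℕ} (A : Matrix (Fin m) (Fin n) ℝ) (s : ℕ) (δ : ℝ) : Prop :=
  ∀ (x : Fin n → ℝ) (J : Finset (Fin n)), J.card ≤ s →
    (1 - δ) * (l2 (restr J x))^2 ≤ (l2 (A.mulVec (restr J x)))^2 ∧
    (l2 (A.mulVec (restr J x)))^2 ≤ (1 + δ) * (l2 (restr J x))^2

lemma l2_nonneg {k : ℕ} (x : Fin k → ℝ) : 0 ≤ l2 x := Real.sqrt_nonneg _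

lemma l2_sq {k : ℕ} (x : Fin k → ℝ) : l2 x ^ 2 = ∑ i, x i ^ 2 :=
  Real.sq_sqrt (Finset.sum_nonneg fun i _ => sq_nonneg _)

lemma l2_le_of_sq_le {k : ℕ} {x : Fin k → ℝ} {c : ℝ} (hc : 0 ≤ c)
    (h : ∑ i, x i ^ 2 ≤ c ^ 2) : l2 x ≤ c := by
  rw [show c = Real.sqrt (c ^ 2) from (Real.sqrt_sq hc).symm]
  exact Real.sqrt_le_sqrt h

lemma cs {k : ℕ} (x y : Fin k → ℝ) : ∑ i, x i * y i ≤ l2 x * l2 y := by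
  have h := Finset.sum_mul_sq_le_sq_mul_sq Finset.univ x y
  calc ∑ i, x i * y i ≤ |∑ i, x i * y i| := le_abs_self _
    _ = Real.sqrt ((∑ i, x i * y i) ^ 2) := (Real.sqrt_sq_eq_abs _).symm
    _ ≤ Real.sqrt ((∑ i, x i ^ 2) * ∑ i, y i ^ 2) := Real.sqrt_le_sqrt h
    _ = l2 x * l2 y := by
        rw [Real.sqrt_mul (Finset.sum_nonneg fun i _ => sq_nonneg _)]; rfl

lemma l2_tri {k : ℕ} (x y : Fin k → ℝ) : l2 (x + y) ≤ l2 x + l2 y := by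
  apply l2_le_of_sq_le (add_nonneg (l2_nonneg x) (l2_nonneg y))
  have h := cs x y
  have hx := l2_sq x; have hy := l2_sq y
  have hsplit : ∑ i, (x + y) i ^ 2 = (∑ i, x i ^ 2) + 2 * (∑ i, x i * y i) + ∑ i, y i ^ 2 := by
    simp only [Pi.add_apply]
    rw [show (2:ℝ) * (∑ i, x i * y i) = ∑ i, 2 * (x i * y i) by rw [Finset.mul_sum],
      ← Finset.sum_add_distrib, ← Finset.sum_add_distrib]
    apply Finset.sum_congr rfl; intro i _; ring
  rw [hsplit]; nlinarith [l2_nonneg x, l2_nonneg y]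

lemma abs_le_l2 {k : ℕ} (x : Fin k → ℝ) (i : Fin k) : |x i| ≤ l2 x := by
  rw [← Real.sqrt_sq_eq_abs]
  apply Real.sqrt_le_sqrt
  exact Finset.single_le_sum (f := fun j => x j ^ 2) (fun j _ => sq_nonneg _) (Finset.mem_univ i)

lemma restr_sq_sum {k : ℕ} (T : Finset (Fin k)) (x : Fin k → ℝ) :
    l2 (restr T x) ^ 2 = ∑ i ∈ T, x i ^ 2 := by
  rw [l2_sq]
  rw [show ∑ i, restr T x i ^ 2 = ∑ i, if i ∈ T then x i ^ 2 else 0 by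
    apply Finset.sum_congr rfl; intro i _; simp only [restr]; split <;> simp]
  rw [Finset.sum_ite_mem, Finset.univ_inter]

lemma restr_eq_self {k : ℕ} {T : Finset (Fin k)} {x : Fin k → ℝ}
    (h : ∀ i ∉ T, x i = 0) : restr T x = x := by
  funext i; simp only [restr]; split
  · rfl
  · exact (h i (by assumption)).symm

lemma l2_restr_le {k : ℕ} (T : Finset (Fin k)) (x : Fin k → ℝ) : l2 (restr T x) ≤ l2 x := by
  apply l2_le_of_sq_le (l2_nonneg x)
  rw [l2_sq, ← l2_sq (restr T x), restr_sq_sum]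
  exact Finset.sum_le_sum_of_subset_of_nonneg (Finset.subset_univ T) fun i _ _ => sq_nonneg _

lemma restr_add {k : ℕ} (T : Finset (Fin k)) (x y : Fin k → ℝ) :
    restr T (x + y) = restr T x + restr T y := by
  funext i; simp only [restr, Pi.add_apply]; split <;> simp

lemma restr_smul {k : ℕ} (T : Finset (Fin k)) (c : ℝ) (x : Fin k → ℝ) :
    restr T (c • x) = c • restr T x := by
  funext i; simp only [restr, Pi.smul_apply, smul_eq_mul]; split <;> simp

lemma l2_smul {k : ℕ} (c : ℝ) (x : Fin k → ℝ) : l2 (c • x) = |c| * l2 x := by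
  unfold l2
  rw [show ∑ i, (c • x) i ^ 2 = c ^ 2 * ∑ i, x i ^ 2 by
    rw [Finset.mul_sum]; apply Finset.sum_congr rfl; intro i _; simp [mul_pow]]
  rw [Real.sqrt_mul (sq_nonneg c), Real.sqrt_sq_eq_abs]

lemma dot_restr {k : ℕ} (T : Finset (Fin k)) (x y : Fin k → ℝ) :
    ∑ i, restr T x i * y i = ∑ i ∈ T, x i * y i := by
  rw [show ∑ i, restr T x i * y i = ∑ i, if i ∈ T then x i * y i else 0 by
    apply Finset.sum_congr rfl; intro i _; simp only [restr]; split <;> simp]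
  rw [Finset.sum_ite_mem, Finset.univ_inter]

lemma adj_dot {m n : ℕ} (A : Matrix (Fin m) (Fin n) ℝ) (w : Fin m → ℝ) (g : Fin n → ℝ) :
    ∑ i, Aᵀ.mulVec w i * g i = ∑ j, w j * A.mulVec g j := by
  simp only [Matrix.mulVec, dotProduct, Matrix.transpose_apply, Finset.sum_mul,
    Finset.mul_sum]
  rw [Finset.sum_comm]
  apply Finset.sum_congr rfl; intro i _; apply Finset.sum_congr rfl; intro j _; ring

lemma thr_close {k : ℕ} {μ : ℝ} (hμ : 0 ≤ μ) (u : Fin k → ℝ) (i : Fin k) :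
    |thrT μ u i - u i| ≤ μ := by
  set y : Fin k → ℝ := softT μ u with hy
  have hL : 0 ≤ l2 y := l2_nonneg y
  have habs : |y i| ≤ l2 y := abs_le_l2 y i
  by_cases hui : |u i| ≤ μ
  · have hyi : y i = 0 := by
      simp only [hy, softT]
      rw [max_eq_right (by linarith)]
      ring
    have : thrT μ u i = 0 := by
      simp only [thrT, enlarge]
      rw [show softT μ u i = y i from rfl, hyi]; ring
    rw [this]; simpa using hui
  · push_neg at hui
    have hune : u i ≠ 0 := by
      intro h; rw [h] at hui; simp at hui; linarith
    have hyiv : y i = (|u i| - μ) * Real.sign (u i) := by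
      simp only [hy, softT]; rw [max_eq_left (by linarith)]
    have hsign : |Real.sign (u i)| = 1 := by
      rcases lt_or_gt_of_ne hune with h | h
      · rw [Real.sign_of_neg h]; simp
      · rw [Real.sign_of_pos h]; simp
    have hyabs : |y i| = |u i| - μ := by
      rw [hyiv, abs_mul, hsign, mul_one, abs_of_pos (by linarith)]
    have hyipos : 0 < |y i| := by rw [hyabs]; linarith
    have hLpos : 0 < l2 y := lt_of_lt_of_le hyipos habs
    have hsgnu : u i = |u i| * Real.sign (u i) := by
      rcases lt_or_gt_of_ne hune with h | h
      · rw [Real.sign_of_neg h, abs_of_neg h]; ring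
      · rw [Real.sign_of_pos h, abs_of_pos h]; ring
    have hexp : thrT μ u i - u i = ((|u i| - μ) * (1 + μ / l2 y) - |u i|) * Real.sign (u i) := by
      have h0 : thrT μ u i = (1 + μ / l2 y) * y i := rfl
      rw [h0, hyiv]
      linear_combination -hsgnu
    rw [hexp, abs_mul, hsign, mul_one]
    have h1 : (|u i| - μ) * (1 + μ / l2 y) - |u i| = μ * ((|u i| - μ) / l2 y - 1) := by
      field_simp; ring
    rw [h1, abs_mul, abs_of_nonneg hμ]
    have h2 : (|u i| - μ) / l2 y ≤ 1 := by
      rw [div_le_one hLpos]; rw [← hyabs]; exact habs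
    have h3 : 0 ≤ (|u i| - μ) / l2 y := div_nonneg (by linarith) hL
    have : |(|u i| - μ) / l2 y - 1| ≤ 1 := abs_le.mpr ⟨by linarith, by linarith⟩
    nlinarith

lemma l2_eq_zero {k : ℕ} {x : Fin k → ℝ} (h : l2 x = 0) : x = 0 := by
  have h2 : ∑ i, x i ^ 2 = 0 := by
    have := l2_sq x; rw [h] at this; simpa using this.symm
  funext i
  have := (Finset.sum_eq_zero_iff_of_nonneg (fun j _ => sq_nonneg (x j))).mp h2 i
    (Finset.mem_univ i)
  exact pow_eq_zero_iff (by norm_num) |>.mp this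

lemma rip_supported {m n t : ℕ} {A : Matrix (Fin m) (Fin n) ℝ} {δ : ℝ} (h : RIP A t δ)
    {J : Finset (Fin n)} (hJ : J.card ≤ t) {x : Fin n → ℝ} (hx : ∀ i ∉ J, x i = 0) :
    (1 - δ) * (l2 x)^2 ≤ (l2 (A.mulVec x))^2 ∧ (l2 (A.mulVec x))^2 ≤ (1 + δ) * (l2 x)^2 := by
  have := h x J hJ
  rwa [restr_eq_self hx] at this

lemma dot_expand {k : ℕ} (x y : Fin k → ℝ) :
    l2 (x + y) ^ 2 = l2 x ^ 2 + 2 * (∑ i, x i * y i) + l2 y ^ 2 := by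
  rw [l2_sq, l2_sq, l2_sq,
    show (2:ℝ) * (∑ i, x i * y i) = ∑ i, 2 * (x i * y i) by rw [Finset.mul_sum],
    ← Finset.sum_add_distrib, ← Finset.sum_add_distrib]
  apply Finset.sum_congr rfl; intro i _; simp only [Pi.add_apply]; ring

lemma rip_bilin_half {m n t : ℕ} {A : Matrix (Fin m) (Fin n) ℝ} {δ : ℝ} (h : RIP A t δ)
    {J : Finset (Fin n)} (hJ : J.card ≤ t) {x y : Fin n → ℝ}
    (hx : ∀ i ∉ J, x i = 0) (hy : ∀ i ∉ J, y i = 0) :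
    (∑ i, A.mulVec x i * A.mulVec y i) - ∑ i, x i * y i ≤ δ * (l2 x ^ 2 + l2 y ^ 2) / 2 := by
  have hadd : ∀ i ∉ J, (x + y) i = 0 := fun i hi => by
    simp [hx i hi, hy i hi]
  have hsub : ∀ i ∉ J, (x - y) i = 0 := fun i hi => by
    simp [hx i hi, hy i hi]
  have h1 := (rip_supported h hJ hadd).2
  have h2 := (rip_supported h hJ hsub).1
  have e1 : A.mulVec (x + y) = A.mulVec x + A.mulVec y := Matrix.mulVec_add A x y
  have e2 : A.mulVec (x - y) = A.mulVec x - A.mulVec y := Matrix.mulVec_sub A x y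
  have e3 : x - y = x + (-y) := by ring
  have e4 : A.mulVec x - A.mulVec y = A.mulVec x + (-(A.mulVec y)) := by ring
  rw [e1, dot_expand] at h1
  rw [e2, e4, dot_expand] at h2
  rw [e3, dot_expand] at h2
  have hnegy : l2 (-y) = l2 y := by
    rw [show -y = (-1 : ℝ) • y by funext i; simp, l2_smul]; simp
  have hnegAy : l2 (-(A.mulVec y)) = l2 (A.mulVec y) := by
    rw [show -(A.mulVec y) = (-1 : ℝ) • (A.mulVec y) by funext i; simp, l2_smul]; simp
  rw [hnegy, hnegAy] at h2
  have hd1 : ∑ i, x i * (-y) i = -∑ i, x i * y i := by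
    rw [← Finset.sum_neg_distrib]; apply Finset.sum_congr rfl; intro i _; simp
  have hd2 : ∑ i, A.mulVec x i * (-(A.mulVec y)) i = -∑ i, A.mulVec x i * A.mulVec y i := by
    rw [← Finset.sum_neg_distrib]; apply Finset.sum_congr rfl; intro i _; simp
  rw [hd1] at h2
  rw [hd2] at h2
  rw [dot_expand x y] at h1
  nlinarith [h1, h2]

lemma rip_bilin {m n t : ℕ} {A : Matrix (Fin m) (Fin n) ℝ} {δ : ℝ} (h : RIP A t δ)
    {J : Finset (Fin n)} (hJ : J.card ≤ t) {x y : Fin n → ℝ}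
    (hx : ∀ i ∉ J, x i = 0) (hy : ∀ i ∉ J, y i = 0) :
    |(∑ i, A.mulVec x i * A.mulVec y i) - ∑ i, x i * y i| ≤ δ * l2 x * l2 y := by
  by_cases hx0 : l2 x = 0
  · have : x = 0 := l2_eq_zero hx0
    subst this
    simp [Matrix.mulVec_zero, hx0]
  by_cases hy0 : l2 y = 0
  · have : y = 0 := l2_eq_zero hy0
    subst this
    simp [Matrix.mulVec_zero, hy0]
  have hxpos : 0 < l2 x := lt_of_le_of_ne (l2_nonneg x) (Ne.symm hx0)
  have hypos : 0 < l2 y := lt_of_le_of_ne (l2_nonneg y) (Ne.symm hy0)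
  set c : ℝ := Real.sqrt (l2 y / l2 x) with hc
  have hcpos : 0 < c := Real.sqrt_pos.mpr (div_pos hypos hxpos)
  have hc2 : c ^ 2 = l2 y / l2 x := Real.sq_sqrt (le_of_lt (div_pos hypos hxpos))
  have hxs : ∀ i ∉ J, (c • x) i = 0 := fun i hi => by simp [hx i hi]
  have hys : ∀ i ∉ J, (c⁻¹ • y) i = 0 := fun i hi => by simp [hy i hi]
  have hys' : ∀ i ∉ J, (-(c⁻¹ • y)) i = 0 := fun i hi => by simp [hy i hi]
  have hl2x : l2 (c • x) ^ 2 = l2 x * l2 y := by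
    rw [l2_smul, mul_pow, sq_abs, hc2]; field_simp
  have hl2y : l2 (c⁻¹ • y) ^ 2 = l2 x * l2 y := by
    rw [l2_smul, mul_pow, sq_abs, inv_pow, hc2]
    rw [show (l2 y / l2 x)⁻¹ = l2 x / l2 y by rw [inv_div]]
    field_simp
  have hl2y' : l2 (-(c⁻¹ • y)) ^ 2 = l2 x * l2 y := by
    rw [show -(c⁻¹ • y) = (-c⁻¹) • y by funext i; simp, l2_smul, mul_pow, sq_abs]
    rw [show (-c⁻¹)^2 = (c⁻¹)^2 by ring, inv_pow, hc2,
      show (l2 y / l2 x)⁻¹ = l2 x / l2 y by rw [inv_div]]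
    field_simp
  have hAc : A.mulVec (c • x) = c • A.mulVec x := Matrix.mulVec_smul A c x
  have hAc' : A.mulVec (c⁻¹ • y) = c⁻¹ • A.mulVec y := Matrix.mulVec_smul A c⁻¹ y
  have hcc : c * c⁻¹ = 1 := mul_inv_cancel₀ (ne_of_gt hcpos)
  have hdots : ∑ i, A.mulVec (c • x) i * A.mulVec (c⁻¹ • y) i
      = ∑ i, A.mulVec x i * A.mulVec y i := by
    rw [hAc, hAc']
    apply Finset.sum_congr rfl; intro i _
    simp only [Pi.smul_apply, smul_eq_mul]
    calc c * A.mulVec x i * (c⁻¹ * A.mulVec y i)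
        = (c * c⁻¹) * (A.mulVec x i * A.mulVec y i) := by ring
      _ = A.mulVec x i * A.mulVec y i := by rw [hcc]; ring
  have hdotv : ∑ i, (c • x) i * (c⁻¹ • y) i = ∑ i, x i * y i := by
    apply Finset.sum_congr rfl; intro i _
    simp only [Pi.smul_apply, smul_eq_mul]
    calc c * x i * (c⁻¹ * y i) = (c * c⁻¹) * (x i * y i) := by ring
      _ = x i * y i := by rw [hcc]; ring
  have key1 := rip_bilin_half h hJ hxs hys
  rw [hdots, hdotv, hl2x, hl2y] at key1
  have key2 := rip_bilin_half h hJ hxs hys'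
  have hdots2 : ∑ i, A.mulVec (c • x) i * A.mulVec (-(c⁻¹ • y)) i
      = -∑ i, A.mulVec x i * A.mulVec y i := by
    rw [show A.mulVec (-(c⁻¹ • y)) = (-c⁻¹) • A.mulVec y by
      rw [show -(c⁻¹ • y) = (-c⁻¹) • y by funext i; simp]
      exact Matrix.mulVec_smul A (-c⁻¹) y, hAc]
    rw [← Finset.sum_neg_distrib]
    apply Finset.sum_congr rfl; intro i _
    simp only [Pi.smul_apply, smul_eq_mul]
    calc c * A.mulVec x i * (-c⁻¹ * A.mulVec y i)
        = -((c * c⁻¹) * (A.mulVec x i * A.mulVec y i)) := by ring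
      _ = -(A.mulVec x i * A.mulVec y i) := by rw [hcc]; ring
  have hdotv2 : ∑ i, (c • x) i * (-(c⁻¹ • y)) i = -∑ i, x i * y i := by
    rw [← Finset.sum_neg_distrib]
    apply Finset.sum_congr rfl; intro i _
    simp only [Pi.smul_apply, Pi.neg_apply, smul_eq_mul]
    calc c * x i * -(c⁻¹ * y i) = -((c * c⁻¹) * (x i * y i)) := by ring
      _ = -(x i * y i) := by rw [hcc]; ring
  rw [hdots2, hdotv2, hl2x, hl2y'] at key2
  rw [abs_le]
  constructor
  · nlinarith [key2]
  · nlinarith [key1]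

lemma l2_zero {k : ℕ} : l2 (0 : Fin k → ℝ) = 0 := by simp [l2]

lemma sum_le_sum_of_card_le {k : ℕ} {D E : Finset (Fin k)} (hcard : D.card ≤ E.card)
    {f : Fin k → ℝ} (hf : ∀ i, 0 ≤ f i) (hle : ∀ j ∈ D, ∀ i ∈ E, f j ≤ f i) :
    ∑ j ∈ D, f j ≤ ∑ i ∈ E, f i := by
  rcases Finset.eq_empty_or_nonempty E with hE | hE
  · subst hE
    simp at hcard
    subst hcard; simp
  · obtain ⟨i0, hi0, hmin⟩ := Finset.exists_min_image E f hE
    have h1 : ∑ j ∈ D, f j ≤ D.card • f i0 :=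
      Finset.sum_le_card_nsmul D f (f i0) fun j hj => hle j hj i0 hi0
    have h2 : E.card • f i0 ≤ ∑ i ∈ E, f i := Finset.card_nsmul_le_sum E f (f i0) hmin
    have h3 : (D.card : ℝ) * f i0 ≤ (E.card : ℝ) * f i0 :=
      mul_le_mul_of_nonneg_right (by exact_mod_cast hcard) (hf i0)
    rw [nsmul_eq_mul] at h1 h2
    linarith

lemma hard_thr {n s : ℕ} (z xbar : Fin n → ℝ) (Sb : Finset (Fin n))
    (hSb : ∀ i ∉ Sb, xbar i = 0) (hSbcard : Sb.card ≤ s)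
    (K : Finset (Fin n)) (hK : K.card = min s n)
    (hKmax : ∀ i ∈ K, ∀ j ∈ Kᶜ, |z j| ≤ |z i|) :
    l2 (restr K z - xbar) ≤ (Real.sqrt 5 + 1) / 2 * l2 (restr (K ∪ Sb) (z - xbar)) := by
  set r : ℝ := Real.sqrt 5 with hrdef
  have hr5 : r ^ 2 = 5 := Real.sq_sqrt (by norm_num)
  have hr0 : 0 ≤ r := Real.sqrt_nonneg _
  have hr2 : 2 ≤ r := by nlinarith
  set w : Fin n → ℝ := z - xbar with hw
  -- main sum decomposition
  have S1 : ∑ i, (restr K z - xbar) i ^ 2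
      = (∑ i ∈ K, w i ^ 2) + ∑ i ∈ Sb \ K, xbar i ^ 2 := by
    rw [← Finset.sum_add_sum_compl K (fun i => (restr K z - xbar) i ^ 2)]
    congr 1
    · apply Finset.sum_congr rfl; intro i hi
      simp only [Pi.sub_apply, restr, if_pos hi, hw]
    · rw [show ∑ i ∈ Kᶜ, (restr K z - xbar) i ^ 2 = ∑ i ∈ Kᶜ, xbar i ^ 2 by
        apply Finset.sum_congr rfl; intro i hi
        rw [Finset.mem_compl] at hi
        simp only [Pi.sub_apply, restr, if_neg hi]; ring]
      symm
      apply Finset.sum_subset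
      · intro i hi
        rw [Finset.mem_compl]
        exact (Finset.mem_sdiff.mp hi).2
      · intro i hicomp hni
        rw [Finset.mem_compl] at hicomp
        by_cases hiSb : i ∈ Sb
        · exact absurd (Finset.mem_sdiff.mpr ⟨hiSb, hicomp⟩) hni
        · rw [hSb i hiSb]; ring
  have Ksplit : ∑ i ∈ K, w i ^ 2
      = (∑ i ∈ K \ Sb, w i ^ 2) + ∑ i ∈ K ∩ Sb, w i ^ 2 := by
    rw [← Finset.sum_union (Finset.disjoint_sdiff_inter K Sb), Finset.sdiff_union_inter]
  -- counting
  have hcount : ∑ j ∈ Sb \ K, z j ^ 2 ≤ ∑ i ∈ K \ Sb, z i ^ 2 := by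
    apply sum_le_sum_of_card_le
    · rcases le_or_gt s n with hsn | hsn
      · have hKc : K.card = s := by rw [hK, min_eq_left hsn]
        have e1 := Finset.card_sdiff_add_card_inter Sb K
        have e2 := Finset.card_sdiff_add_card_inter K Sb
        have e3 : (Sb ∩ K).card = (K ∩ Sb).card := by rw [Finset.inter_comm]
        omega
      · have hKc : K.card = n := by rw [hK, min_eq_right (le_of_lt hsn)]
        have : K = Finset.univ := Finset.eq_univ_of_card K (by rw [hKc]; simp)
        rw [this, Finset.sdiff_eq_empty_iff_subset.mpr (Finset.subset_univ Sb)]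
        simp
    · intro i; exact sq_nonneg _
    · intro j hj i hi
      have hjc : j ∈ Kᶜ := Finset.mem_compl.mpr (Finset.mem_sdiff.mp hj).2
      have hik : i ∈ K := (Finset.mem_sdiff.mp hi).1
      calc z j ^ 2 = |z j| ^ 2 := (sq_abs _).symm
        _ ≤ |z i| ^ 2 := pow_le_pow_left₀ (abs_nonneg _) (hKmax i hik j hjc) 2
        _ = z i ^ 2 := sq_abs _
  have hzw : ∑ i ∈ K \ Sb, z i ^ 2 = ∑ i ∈ K \ Sb, w i ^ 2 := by
    apply Finset.sum_congr rfl; intro i hi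
    have : xbar i = 0 := hSb i (Finset.mem_sdiff.mp hi).2
    simp [hw, this]
  -- triangle for D
  set a : ℝ := l2 (restr (K \ Sb) w) with hadef
  set b2 : ℝ := l2 (restr (K ∩ Sb) w) with hb2def
  set c2 : ℝ := l2 (restr (Sb \ K) w) with hc2def
  set X : ℝ := l2 (restr (K ∪ Sb) w) with hXdef
  have ha0 : 0 ≤ a := l2_nonneg _
  have hb0 : 0 ≤ b2 := l2_nonneg _
  have hc0 : 0 ≤ c2 := l2_nonneg _
  have hX0 : 0 ≤ X := l2_nonneg _
  have htriD : l2 (restr (Sb \ K) xbar) ≤ c2 + a := by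
    have hsplit : restr (Sb \ K) xbar
        = restr (Sb \ K) (xbar - z) + restr (Sb \ K) z := by
      rw [← restr_add]; congr 1; funext i; simp
    rw [hsplit]
    have t1 : l2 (restr (Sb \ K) (xbar - z)) = c2 := by
      rw [show xbar - z = (-1 : ℝ) • w by funext i; simp [hw], restr_smul, l2_smul]
      simp [hc2def]
    have t2 : l2 (restr (Sb \ K) z) ≤ a := by
      apply l2_le_of_sq_le ha0
      have ea : a ^ 2 = ∑ i ∈ K \ Sb, w i ^ 2 := by rw [hadef, restr_sq_sum]
      rw [← l2_sq, restr_sq_sum, ea, ← hzw]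
      exact hcount
    calc l2 (restr (Sb \ K) (xbar - z) + restr (Sb \ K) z)
        ≤ l2 (restr (Sb \ K) (xbar - z)) + l2 (restr (Sb \ K) z) := l2_tri _ _
      _ ≤ c2 + a := by rw [t1]; linarith
  have hDsum : ∑ i ∈ Sb \ K, xbar i ^ 2 ≤ (c2 + a) ^ 2 := by
    rw [← restr_sq_sum]
    exact pow_le_pow_left₀ (l2_nonneg _) htriD 2
  have hXsq : X ^ 2 = a ^ 2 + b2 ^ 2 + c2 ^ 2 := by
    rw [hXdef, hadef, hb2def, hc2def, restr_sq_sum, restr_sq_sum, restr_sq_sum, restr_sq_sum,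
      ← Finset.union_sdiff_self_eq_union, Finset.sum_union Finset.disjoint_sdiff, Ksplit]
  -- final numeric bound
  apply l2_le_of_sq_le (by positivity)
  have hKasum : ∑ i ∈ K, w i ^ 2 = a ^ 2 + b2 ^ 2 := by
    rw [Ksplit, hadef, hb2def, restr_sq_sum, restr_sq_sum]
  rw [S1, hKasum]
  have hexp : ((r + 1) / 2 * X) ^ 2 = (r + 1) ^ 2 / 4 * X ^ 2 := by ring
  rw [hexp, hXsq]
  have hr1 : (0:ℝ) < 2 * (r - 1) := by linarith
  have e : 2 * (r - 1) * ((3 + r) / 2 * (a^2 + b2^2 + c2^2) - (a^2 + b2^2 + (c2 + a)^2))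
      = ((r - 1) * a - 2 * c2)^2 + 4 * b2^2 + (r^2 - 5) * (b2^2 + c2^2) := by ring
  rw [hr5] at e
  have hGmul : 0 ≤ 2 * (r - 1) * ((3 + r) / 2 * (a^2 + b2^2 + c2^2)
      - (a^2 + b2^2 + (c2 + a)^2)) := by
    rw [e]
    have h55 : (5:ℝ) - 5 = 0 := by norm_num
    rw [h55, zero_mul, add_zero]
    positivity
  have hG : 0 ≤ (3 + r) / 2 * (a^2 + b2^2 + c2^2) - (a^2 + b2^2 + (c2 + a)^2) := by
    exact (mul_nonneg_iff_of_pos_left hr1).mp hGmul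
  have hco : (r + 1)^2 / 4 = (3 + r) / 2 := by linear_combination hr5 / 4
  rw [hco]
  linarith [hDsum]

theorem stmt18 {m n s : ℕ} (A : Matrix (Fin m) (Fin n) ℝ) (δ3 δ2 : ℝ)
    (hRIP3 : RIP A (3 * s) δ3) (hRIP2 : RIP A (2 * s) δ2) (hδ2 : 0 ≤ δ2)
    (hδ : δ3 < (Real.sqrt 5 - 1) / 2)
    (v lam : ℝ) (hlam : 0 ≤ lam)
    (hv1 : (3 - Real.sqrt 5) / (2 * (1 - δ3)) < v)
    (hv2 : v < (Real.sqrt 5 + 1) / (2 * (1 - δ3)))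
    (xbar xk : Fin n → ℝ) (ε : Fin m → ℝ) (b : Fin m → ℝ)
    (hb : b = A.mulVec xbar + ε)
    (Sb : Finset (Fin n)) (hSb : ∀ i ∉ Sb, xbar i = 0) (hSbcard : Sb.card ≤ s)
    (Sk : Finset (Fin n)) (hSk : ∀ i ∉ Sk, xk i = 0) (hSkcard : Sk.card ≤ s)
    (z : Fin n → ℝ)
    (hz : z = thrT (v * lam) (xk - v • Aᵀ.mulVec (A.mulVec xk - b)))
    (K : Finset (Fin n)) (hK : K.card = min s n)
    (hKmax : ∀ i ∈ K, ∀ j ∈ Kᶜ, |z j| ≤ |z i|)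
    (xk1 : Fin n → ℝ) (hxk1 : xk1 = restr K z) :
    l2 (xk1 - xbar) ≤ (Real.sqrt 5 + 1) / 2 * (|1 - v| + v * δ3) * l2 (xk - xbar) +
      (Real.sqrt 5 + 1) / 2 * v *
        (Real.sqrt (1 + δ2) * l2 ε + Real.sqrt (2 * s) * lam) := by
  have hr5 : Real.sqrt 5 ^ 2 = 5 := Real.sq_sqrt (by norm_num)
  have hr0 : 0 ≤ Real.sqrt 5 := Real.sqrt_nonneg _
  have hr2 : 2 ≤ Real.sqrt 5 := by nlinarith
  have hr3 : Real.sqrt 5 < 3 := by nlinarith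
  have hδ1 : δ3 < 1 := by
    have : (Real.sqrt 5 - 1) / 2 < 1 := by linarith
    linarith
  have hv0 : 0 < v :=
    lt_trans (div_pos (by linarith) (by linarith)) hv1
  have hφ : 0 ≤ (Real.sqrt 5 + 1) / 2 := by linarith
  -- cardinalities
  have hKcard : K.card ≤ s := by rw [hK]; exact min_le_left _ _
  have hTcard : (K ∪ Sb).card ≤ 2 * s :=
    le_trans (Finset.card_union_le _ _) (by omega)
  have hJcard : (K ∪ Sb ∪ Sk).card ≤ 3 * s := by
    have h1 := Finset.card_union_le (K ∪ Sb) Sk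
    have h2 := Finset.card_union_le K Sb
    omega
  have hTJ : K ∪ Sb ⊆ K ∪ Sb ∪ Sk := Finset.subset_union_left
  set d : Fin n → ℝ := xk - xbar with hd
  have hdsupp : ∀ i ∉ K ∪ Sb ∪ Sk, d i = 0 := by
    intro i hi
    have hiSb : i ∉ Sb := fun h => hi (Finset.mem_union_left _ (Finset.mem_union_right _ h))
    have hiSk : i ∉ Sk := fun h => hi (Finset.mem_union_right _ h)
    simp [hd, hSk i hiSk, hSb i hiSb]
  set u : Fin n → ℝ := xk - v • Aᵀ.mulVec (A.mulVec xk - b) with hu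
  -- decomposition of u - xbar
  have hud : u - xbar
      = (1 - v) • d + v • (d - Aᵀ.mulVec (A.mulVec d)) + v • Aᵀ.mulVec ε := by
    have e1 : A.mulVec xk - b = A.mulVec d - ε := by
      rw [hb, hd, Matrix.mulVec_sub]
      funext i
      simp only [Pi.sub_apply, Pi.add_apply]
      ring
    have e2 : Aᵀ.mulVec (A.mulVec d - ε)
        = Aᵀ.mulVec (A.mulVec d) - Aᵀ.mulVec ε := Matrix.mulVec_sub _ _ _
    rw [hu, e1, e2]
    funext i
    simp only [Pi.sub_apply, Pi.add_apply, Pi.smul_apply, smul_eq_mul, hd]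
    ring
  -- the three pieces
  have hrestr : restr (K ∪ Sb) (u - xbar)
      = (1 - v) • restr (K ∪ Sb) d
        + v • restr (K ∪ Sb) (d - Aᵀ.mulVec (A.mulVec d))
        + v • restr (K ∪ Sb) (Aᵀ.mulVec ε) := by
    rw [hud, restr_add, restr_add, restr_smul, restr_smul, restr_smul]
  -- bound on g1
  have hg1 : l2 (restr (K ∪ Sb) (d - Aᵀ.mulVec (A.mulVec d))) ≤ δ3 * l2 d := by
    by_cases hd0 : l2 d = 0
    · have hdz : d = 0 := l2_eq_zero hd0
      have : restr (K ∪ Sb) (d - Aᵀ.mulVec (A.mulVec d)) = 0 := by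
        rw [hdz]
        funext i
        simp [restr, Matrix.mulVec_zero]
      rw [this, l2_zero, hd0, mul_zero]
    · have hdpos : 0 < l2 d := lt_of_le_of_ne (l2_nonneg d) (Ne.symm hd0)
      have hδ3nn : 0 ≤ δ3 := by
        have := rip_supported hRIP3 hJcard hdsupp
        nlinarith [this.1, this.2, pow_pos hdpos 2]
      set g1 : Fin n → ℝ := restr (K ∪ Sb) (d - Aᵀ.mulVec (A.mulVec d)) with hg1def
      have hg1supp : ∀ i ∉ K ∪ Sb ∪ Sk, g1 i = 0 := by
        intro i hi
        have : i ∉ K ∪ Sb := fun h => hi (hTJ h)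
        simp [hg1def, restr, this]
      have hdot1 : ∑ i, (d - Aᵀ.mulVec (A.mulVec d)) i * g1 i = l2 g1 ^ 2 := by
        rw [l2_sq]
        apply Finset.sum_congr rfl
        intro i _
        simp only [hg1def, restr]
        split <;> ring
      have hdot2 : ∑ i, (d - Aᵀ.mulVec (A.mulVec d)) i * g1 i
          = (∑ i, d i * g1 i) - ∑ i, Aᵀ.mulVec (A.mulVec d) i * g1 i := by
        rw [← Finset.sum_sub_distrib]
        apply Finset.sum_congr rfl
        intro i _
        simp only [Pi.sub_apply]
        ring
      have hadj : ∑ i, Aᵀ.mulVec (A.mulVec d) i * g1 i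
          = ∑ j, A.mulVec d j * A.mulVec g1 j := adj_dot A (A.mulVec d) g1
      have hbil := rip_bilin hRIP3 hJcard hdsupp hg1supp
      have hkey : l2 g1 ^ 2 ≤ δ3 * l2 d * l2 g1 := by
        rw [← hdot1, hdot2, hadj]
        have := abs_le.mp hbil
        linarith [this.1]
      rcases eq_or_lt_of_le (l2_nonneg g1) with hg0 | hgpos
      · rw [← hg0]
        exact mul_nonneg hδ3nn (le_of_lt hdpos)
      · nlinarith [hkey, hgpos]
  -- bound on g2
  have hg2 : l2 (restr (K ∪ Sb) (Aᵀ.mulVec ε)) ≤ Real.sqrt (1 + δ2) * l2 ε := by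
    set g2 : Fin n → ℝ := restr (K ∪ Sb) (Aᵀ.mulVec ε) with hg2def
    have hg2supp : ∀ i ∉ K ∪ Sb, g2 i = 0 := by
      intro i hi
      simp [hg2def, restr, hi]
    have hdot1 : ∑ i, Aᵀ.mulVec ε i * g2 i = l2 g2 ^ 2 := by
      rw [l2_sq]
      apply Finset.sum_congr rfl
      intro i _
      simp only [hg2def, restr]
      split <;> ring
    have hadj : ∑ i, Aᵀ.mulVec ε i * g2 i = ∑ j, ε j * A.mulVec g2 j := adj_dot A ε g2
    have hCS : ∑ j, ε j * A.mulVec g2 j ≤ l2 ε * l2 (A.mulVec g2) := cs ε (A.mulVec g2)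
    have hAg2 : l2 (A.mulVec g2) ≤ Real.sqrt (1 + δ2) * l2 g2 := by
      apply l2_le_of_sq_le (mul_nonneg (Real.sqrt_nonneg _) (l2_nonneg _))
      rw [← l2_sq, mul_pow, Real.sq_sqrt (by linarith : (0:ℝ) ≤ 1 + δ2)]
      exact (rip_supported hRIP2 hTcard hg2supp).2
    have hkey : l2 g2 ^ 2 ≤ l2 ε * (Real.sqrt (1 + δ2) * l2 g2) := by
      rw [← hdot1, hadj]
      calc ∑ j, ε j * A.mulVec g2 j ≤ l2 ε * l2 (A.mulVec g2) := hCS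
        _ ≤ l2 ε * (Real.sqrt (1 + δ2) * l2 g2) :=
          mul_le_mul_of_nonneg_left hAg2 (l2_nonneg _)
    rcases eq_or_lt_of_le (l2_nonneg g2) with hg0 | hgpos
    · rw [← hg0]
      exact mul_nonneg (Real.sqrt_nonneg _) (l2_nonneg _)
    · nlinarith [hkey, hgpos]
  -- bound on z - u
  have hzu : l2 (restr (K ∪ Sb) (z - u)) ≤ Real.sqrt (2 * s) * (v * lam) := by
    have hμ : 0 ≤ v * lam := mul_nonneg (le_of_lt hv0) hlam
    apply l2_le_of_sq_le (mul_nonneg (Real.sqrt_nonneg _) hμ)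
    rw [← l2_sq, restr_sq_sum, mul_pow,
      Real.sq_sqrt (by positivity : (0:ℝ) ≤ 2 * (s:ℝ))]
    calc ∑ i ∈ K ∪ Sb, (z - u) i ^ 2 ≤ ∑ _i ∈ K ∪ Sb, (v * lam) ^ 2 := by
          apply Finset.sum_le_sum
          intro i _
          have hcl : |z i - u i| ≤ v * lam := by
            rw [hz, hu]
            exact thr_close hμ _ i
          calc (z - u) i ^ 2 = |z i - u i| ^ 2 := by rw [sq_abs]; rfl
            _ ≤ (v * lam) ^ 2 := pow_le_pow_left₀ (abs_nonneg _) hcl 2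
      _ = ((K ∪ Sb).card : ℝ) * (v * lam) ^ 2 := by
          rw [Finset.sum_const, nsmul_eq_mul]
      _ ≤ 2 * (s:ℝ) * (v * lam) ^ 2 := by
          apply mul_le_mul_of_nonneg_right _ (sq_nonneg _)
          exact_mod_cast hTcard
  -- triangle inequalities
  have htriw : l2 (restr (K ∪ Sb) (z - xbar))
      ≤ l2 (restr (K ∪ Sb) (z - u)) + l2 (restr (K ∪ Sb) (u - xbar)) := by
    rw [show restr (K ∪ Sb) (z - xbar)
        = restr (K ∪ Sb) (z - u) + restr (K ∪ Sb) (u - xbar) by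
      rw [← restr_add, sub_add_sub_cancel]]
    exact l2_tri _ _
  have hDbound : l2 (restr (K ∪ Sb) (u - xbar))
      ≤ |1 - v| * l2 d + v * (δ3 * l2 d) + v * (Real.sqrt (1 + δ2) * l2 ε) := by
    rw [hrestr]
    have t1 := l2_tri ((1 - v) • restr (K ∪ Sb) d
        + v • restr (K ∪ Sb) (d - Aᵀ.mulVec (A.mulVec d)))
      (v • restr (K ∪ Sb) (Aᵀ.mulVec ε))
    have t2 := l2_tri ((1 - v) • restr (K ∪ Sb) d)
      (v • restr (K ∪ Sb) (d - Aᵀ.mulVec (A.mulVec d)))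
    have e1 : l2 ((1 - v) • restr (K ∪ Sb) d) ≤ |1 - v| * l2 d := by
      rw [l2_smul]
      exact mul_le_mul_of_nonneg_left (l2_restr_le _ _) (abs_nonneg _)
    have e2 : l2 (v • restr (K ∪ Sb) (d - Aᵀ.mulVec (A.mulVec d))) ≤ v * (δ3 * l2 d) := by
      rw [l2_smul, abs_of_pos hv0]
      exact mul_le_mul_of_nonneg_left hg1 (le_of_lt hv0)
    have e3 : l2 (v • restr (K ∪ Sb) (Aᵀ.mulVec ε)) ≤ v * (Real.sqrt (1 + δ2) * l2 ε) := by
      rw [l2_smul, abs_of_pos hv0]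
      exact mul_le_mul_of_nonneg_left hg2 (le_of_lt hv0)
    linarith
  -- hard thresholding
  have hmain := hard_thr z xbar Sb hSb hSbcard K hK hKmax
  rw [hxk1]
  calc l2 (restr K z - xbar)
      ≤ (Real.sqrt 5 + 1) / 2 * l2 (restr (K ∪ Sb) (z - xbar)) := hmain
    _ ≤ (Real.sqrt 5 + 1) / 2 * (Real.sqrt (2 * s) * (v * lam)
          + (|1 - v| * l2 d + v * (δ3 * l2 d) + v * (Real.sqrt (1 + δ2) * l2 ε))) := by
        apply mul_le_mul_of_nonneg_left _ hφ
        linarith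
    _ = (Real.sqrt 5 + 1) / 2 * (|1 - v| + v * δ3) * l2 d +
        (Real.sqrt 5 + 1) / 2 * v *
          (Real.sqrt (1 + δ2) * l2 ε + Real.sqrt (2 * s) * lam) := by
        ring
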